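/- arXiv:1403.5808 — 2 statements merged into one kernel-verified Lean document; each statement's English description precedes it below -/
import Mathlib

section
/- Let q be a prime power and let k, d, n be integers with 2 ≤ k ≤ q − 1 and 0 ≤ d < n. Suppose that for every k-tuple (h_1, …, h_k) of polynomials in F_q[t] such that every h_i has degree exactly d and every difference h_i − h_j (i ≠ j) has degree exactly d, there exists f ∈ F_q[t] of degree n such that at least two of the polynomials f + h_1, …, f + h_k are monic and irreducible. Then the number of polynomials g ∈ F_q[t] of degree exactly d for which there exist monic irreducible polynomials f_1, f_2 ∈ F_q[t] of degree n with f_1 − f_2 = g is at least (1/(k−1) − 1/(q−1)) · q^d · (q−1). -/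
open Polynomial

lemma aux_finite_degreeLT (F : Type*) [Field F] [Fintype F] (n : ℕ) :
    {p : F[X] | p.degree < (n : WithBot ℕ)}.Finite := by
  have he : {p : F[X] | p.degree < (n : WithBot ℕ)} = ↑(Polynomial.degreeLT F n) := by
    ext p; simp [Polynomial.mem_degreeLT]
  rw [he]
  have : Finite (Polynomial.degreeLT F n) :=
    Finite.of_equiv _ (Polynomial.degreeLTEquiv F n).symm.toEquiv
  exact Set.toFinite _

lemma aux_ncard_degreeLT (F : Type*) [Field F] [Fintype F] (n : ℕ) :
    {p : F[X] | p.degree < (n : WithBot ℕ)}.ncard = Fintype.card F ^ n := by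
  have he : {p : F[X] | p.degree < (n : WithBot ℕ)} = ↑(Polynomial.degreeLT F n) := by
    ext p; simp [Polynomial.mem_degreeLT]
  rw [he, ← Nat.card_coe_set_eq]
  have := Nat.card_congr (Polynomial.degreeLTEquiv F n).toEquiv
  rw [show Nat.card ↑(↑(Polynomial.degreeLT F n) : Set F[X]) = Nat.card (Polynomial.degreeLT F n) from rfl, this]
  simp [Nat.card_eq_fintype_card]

lemma aux_eq_diff (F : Type*) [Field F] (d : ℕ) :
    {p : F[X] | p.degree = (d : ℕ)} =
      {p : F[X] | p.degree < ((d+1 : ℕ) : WithBot ℕ)} \ {p : F[X] | p.degree < (d : WithBot ℕ)} := by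
  ext p
  simp only [Set.mem_setOf_eq, Set.mem_diff, not_lt]
  constructor
  · intro h
    rw [h]
    exact ⟨by exact_mod_cast Nat.lt_succ_self d, le_refl _⟩
  · rintro ⟨h1, h2⟩
    have h3 : p.degree ≤ ((d : ℕ) : WithBot ℕ) := by
      rcases hp : p.degree with _ | m
      · exact bot_le
      · rw [hp, Nat.cast_withBot] at h1
        rw [Nat.cast_withBot]
        have hm : m < d + 1 := WithBot.coe_lt_coe.mp h1
        exact WithBot.coe_le_coe.mpr (Nat.lt_succ_iff.mp hm)
    exact le_antisymm h3 h2

lemma aux_finite_degreeEq (F : Type*) [Field F] [Fintype F] (d : ℕ) :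
    {p : F[X] | p.degree = (d : ℕ)}.Finite := by
  rw [aux_eq_diff]
  exact (aux_finite_degreeLT F (d+1)).diff

lemma aux_ncard_degreeEq (F : Type*) [Field F] [Fintype F] (d : ℕ) :
    {p : F[X] | p.degree = (d : ℕ)}.ncard = Fintype.card F ^ d * (Fintype.card F - 1) := by
  have hsub : {p : F[X] | p.degree < (d : WithBot ℕ)} ⊆
      {p : F[X] | p.degree < ((d+1 : ℕ) : WithBot ℕ)} :=
    by intro p hp
       simp only [Set.mem_setOf_eq] at hp ⊢
       exact lt_trans hp (by exact_mod_cast Nat.lt_succ_self d)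
  rw [aux_eq_diff, Set.ncard_diff hsub (aux_finite_degreeLT F d), aux_ncard_degreeLT,
    aux_ncard_degreeLT]
  have hq : 1 ≤ Fintype.card F := Fintype.card_pos
  rw [pow_succ, Nat.mul_sub]
  simp
open Polynomial

lemma aux_degree_sub (F : Type*) [Field F] (d : ℕ) (a b : F[X])
    (ha : a.degree = (d : ℕ)) (hb : b.degree = (d : ℕ))
    (hlc : a.leadingCoeff ≠ b.leadingCoeff) : (a - b).degree = (d : ℕ) := by
  have hna : a.natDegree = d := natDegree_eq_of_degree_eq_some ha
  have hnb : b.natDegree = d := natDegree_eq_of_degree_eq_some hb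
  have hcoeff : (a - b).coeff d ≠ 0 := by
    rw [coeff_sub]
    intro h
    apply hlc
    rw [leadingCoeff, hna, leadingCoeff, hnb]
    exact sub_eq_zero.mp h
  refine le_antisymm ?_ (le_degree_of_ne_zero hcoeff)
  calc (a - b).degree ≤ max a.degree b.degree := degree_sub_le a b
    _ ≤ (d : ℕ) := by rw [ha, hb]; simp

lemma aux_lc_class (F : Type*) [Field F] [Fintype F] (d : ℕ) (c : F) (hc : c ≠ 0) :
    {p : F[X] | p.degree = (d : ℕ) ∧ p.leadingCoeff = c}.ncard = Fintype.card F ^ d := by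
  have himg : {p : F[X] | p.degree = (d : ℕ) ∧ p.leadingCoeff = c} =
      (fun p => p + C c * X ^ d) '' {p : F[X] | p.degree < (d : WithBot ℕ)} := by
    ext p
    simp only [Set.mem_setOf_eq, Set.mem_image]
    constructor
    · rintro ⟨hdeg, hlc⟩
      refine ⟨p - C c * X ^ d, ?_, by ring⟩
      have hp0 : p ≠ 0 := fun h => by simp [h] at hdeg
      have hdm : (C c * X ^ d).degree = ((d : ℕ) : WithBot ℕ) := degree_C_mul_X_pow d hc
      have := degree_sub_lt (hdeg.trans hdm.symm) hp0 (by
        rw [hlc, leadingCoeff, natDegree_eq_of_degree_eq_some hdm, coeff_C_mul, coeff_X_pow]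
        simp)
      simpa [hdeg] using this
    · rintro ⟨r, hr, rfl⟩
      have hdm : (C c * X ^ d).degree = ((d : ℕ) : WithBot ℕ) := degree_C_mul_X_pow d hc
      have hdeg : (r + C c * X ^ d).degree = ((d : ℕ) : WithBot ℕ) := by
        rw [degree_add_eq_right_of_degree_lt (by rw [hdm]; exact hr), hdm]
      refine ⟨hdeg, ?_⟩
      rw [leadingCoeff, natDegree_eq_of_degree_eq_some hdeg, coeff_add,
        coeff_eq_zero_of_degree_lt hr, coeff_C_mul, coeff_X_pow]
      simp
  rw [himg, Set.ncard_image_of_injective _ (add_left_injective _), aux_ncard_degreeLT]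
lemma aux_greedy (F : Type*) [Field F] [Fintype F] (d : ℕ) (G : Set F[X])
    (hG : G ⊆ {p : F[X] | p.degree = (d : ℕ)})
    (hGsymm : ∀ g ∈ G, -g ∈ G) (k : ℕ)
    (hcount : (k - 1) * (Fintype.card F ^ d + G.ncard) <
      Fintype.card F ^ d * (Fintype.card F - 1)) :
    ∀ i, i ≤ k → ∃ s : Finset F[X], s.card = i ∧ (∀ p ∈ s, p.degree = (d : ℕ)) ∧
      ∀ p ∈ s, ∀ r ∈ s, p ≠ r → p.leadingCoeff ≠ r.leadingCoeff ∧ p - r ∉ G := by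
  classical
  have hGfin : G.Finite := (aux_finite_degreeEq F d).subset hG
  set GF : Finset F[X] := hGfin.toFinset with hGF
  set SdF : Finset F[X] := (aux_finite_degreeEq F d).toFinset with hSdF
  have hSdcard : SdF.card = Fintype.card F ^ d * (Fintype.card F - 1) := by
    rw [hSdF, ← Set.ncard_eq_toFinset_card _ (aux_finite_degreeEq F d), aux_ncard_degreeEq]
  have hmemSd : ∀ p : F[X], p ∈ SdF ↔ p.degree = (d : ℕ) := by
    intro p; rw [hSdF, Set.Finite.mem_toFinset]; rfl
  have hGcard : GF.card = G.ncard := by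
    rw [hGF, ← Set.ncard_eq_toFinset_card _ hGfin]
  intro i
  induction i with
  | zero => intro _; exact ⟨∅, by simp⟩
  | succ i ih =>
    intro hik
    obtain ⟨s, hcard, hdeg, hpair⟩ := ih (Nat.le_of_succ_le hik)
    set B : Finset F[X] := s.biUnion (fun x =>
      (SdF.filter (fun p => p.leadingCoeff = x.leadingCoeff)) ∪ GF.image (fun g => x + g))
      with hB
    have hBcard : B.card < SdF.card := by
      have h1 : B.card ≤ s.card * (Fintype.card F ^ d + G.ncard) := by
        rw [hB]
        refine le_trans Finset.card_biUnion_le ?_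
        refine le_trans (Finset.sum_le_sum (g := fun _ => Fintype.card F ^ d + G.ncard)
          (fun x hx => ?_)) (by rw [Finset.sum_const, smul_eq_mul])
        refine le_trans (Finset.card_union_le _ _) (Nat.add_le_add ?_ ?_)
        · have hlcx : x.leadingCoeff ≠ 0 := by
            intro h0
            have := hdeg x hx
            rw [leadingCoeff_eq_zero.mp h0] at this
            simp at this
          have hset : ((SdF.filter (fun p => p.leadingCoeff = x.leadingCoeff)) : Set F[X]) =
              {p : F[X] | p.degree = (d : ℕ) ∧ p.leadingCoeff = x.leadingCoeff} := by
            ext p; simp [hmemSd p]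
          calc (SdF.filter (fun p => p.leadingCoeff = x.leadingCoeff)).card
              = ((SdF.filter (fun p => p.leadingCoeff = x.leadingCoeff)) : Set F[X]).ncard := by
                rw [Set.ncard_coe_finset]
            _ = Fintype.card F ^ d := by rw [hset, aux_lc_class F d _ hlcx]
            _ ≤ Fintype.card F ^ d := le_refl _
        · exact le_trans (Finset.card_image_le) (le_of_eq hGcard)
      calc B.card ≤ s.card * (Fintype.card F ^ d + G.ncard) := h1
        _ ≤ (k - 1) * (Fintype.card F ^ d + G.ncard) := by
            refine Nat.mul_le_mul_right _ ?_
            omega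
        _ < Fintype.card F ^ d * (Fintype.card F - 1) := hcount
        _ = SdF.card := hSdcard.symm
    obtain ⟨y, hySd, hyB⟩ := Finset.not_subset.mp
      (fun hsub => absurd (Finset.card_le_card hsub) (not_le.mpr hBcard))
    have hyNotB : ∀ x ∈ s, y.leadingCoeff ≠ x.leadingCoeff ∧ y - x ∉ G := by
      intro x hx
      constructor
      · intro hlc
        exact hyB (Finset.mem_biUnion.mpr ⟨x, hx, Finset.mem_union_left _
          (Finset.mem_filter.mpr ⟨hySd, hlc⟩)⟩)
      · intro hyG
        refine hyB (Finset.mem_biUnion.mpr ⟨x, hx, Finset.mem_union_right _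
          (Finset.mem_image.mpr ⟨y - x, hGfin.mem_toFinset.mpr hyG, by ring⟩)⟩)
    have hyns : y ∉ s := fun hys => (hyNotB y hys).1 rfl
    refine ⟨insert y s, ?_, ?_, ?_⟩
    · rw [Finset.card_insert_of_notMem hyns, hcard]
    · intro p hp
      rcases Finset.mem_insert.mp hp with rfl | hp
      · exact (hmemSd p).mp hySd
      · exact hdeg p hp
    · intro p hp r hr hpr
      rcases Finset.mem_insert.mp hp with hpy | hp
      · rcases Finset.mem_insert.mp hr with hry | hr
        · exact absurd (hpy.trans hry.symm) hpr
        · obtain ⟨h1, h2⟩ := hyNotB r hr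
          exact ⟨by rw [hpy]; exact h1, by rw [hpy]; exact h2⟩
      · rcases Finset.mem_insert.mp hr with hry | hr
        · obtain ⟨h1, h2⟩ := hyNotB p hp
          refine ⟨fun h => h1 (by rw [hry] at h; exact h.symm), fun hpG => ?_⟩
          have h3 := hGsymm _ hpG
          rw [neg_sub, hry] at h3
          exact h2 h3
        · exact hpair p hp r hr hpr


/-- **Gap-counting induction step** (from the proof of Theorem 1.4(ii)).
Let `q` be a prime power and `2 ≤ k ≤ q - 1`, `0 ≤ d < n`. Suppose that for every
`k`-tuple `(h 1, …, h k)` of polynomials of degree exactly `d` whose pairwise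
differences all have degree exactly `d`, there is an `f` of degree `n` such that at
least two of the `f + h i` are monic irreducible. Then the number of polynomials `g`
of degree exactly `d` occurring as differences of monic irreducibles of degree `n`
is at least `(1/(k-1) - 1/(q-1)) · q^d · (q-1)`. -/
theorem gap_counting_induction_step (F : Type*) [Field F] [Fintype F]
    (k d n : ℕ) (hk2 : 2 ≤ k) (hkq : k ≤ Fintype.card F - 1) (hdn : d < n)
    (hyp : ∀ h : Fin k → Polynomial F,
      (∀ i, (h i).degree = (d : ℕ)) →
      (∀ i j, i ≠ j → (h i - h j).degree = (d : ℕ)) →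
      ∃ f : Polynomial F, f.natDegree = n ∧
        2 ≤ {i : Fin k | (f + h i).Monic ∧ Irreducible (f + h i)}.ncard) :
    ((1 : ℝ) / (k - 1) - 1 / (Fintype.card F - 1)) * (Fintype.card F : ℝ) ^ d *
        ((Fintype.card F : ℝ) - 1) ≤
      ({g : Polynomial F | g.degree = (d : ℕ) ∧
        ∃ f₁ f₂ : Polynomial F,
          f₁.Monic ∧ Irreducible f₁ ∧ f₁.natDegree = n ∧
          f₂.Monic ∧ Irreducible f₂ ∧ f₂.natDegree = n ∧
          f₁ - f₂ = g}.ncard : ℝ) := by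
  classical
  set q := Fintype.card F with hq
  set G : Set (Polynomial F) := {g : Polynomial F | g.degree = (d : ℕ) ∧
    ∃ f₁ f₂ : Polynomial F,
      f₁.Monic ∧ Irreducible f₁ ∧ f₁.natDegree = n ∧
      f₂.Monic ∧ Irreducible f₂ ∧ f₂.natDegree = n ∧
      f₁ - f₂ = g} with hGdef
  by_contra hcon
  push_neg at hcon
  have hq3 : 3 ≤ q := by omega
  -- translate the counting hypothesis to ℕ
  have hkpos : (0 : ℝ) < (k : ℝ) - 1 := by
    have : (2 : ℝ) ≤ (k : ℝ) := by exact_mod_cast hk2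
    linarith
  have hqpos : (0 : ℝ) < (q : ℝ) - 1 := by
    have : (3 : ℝ) ≤ (q : ℝ) := by exact_mod_cast hq3
    linarith
  have keyR : ((k : ℝ) - 1) * ((q : ℝ) ^ d + (G.ncard : ℝ)) < (q : ℝ) ^ d * ((q : ℝ) - 1) := by
    have hrw : (1 / ((k:ℝ) - 1) - 1 / ((q:ℝ) - 1)) * (q:ℝ) ^ d * ((q:ℝ) - 1) =
        ((q:ℝ) ^ d * ((q:ℝ) - 1)) / ((k:ℝ) - 1) - (q:ℝ) ^ d := by
      field_simp
    rw [hrw] at hcon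
    have h2 : ((q:ℝ) ^ d + (G.ncard : ℝ)) < ((q:ℝ) ^ d * ((q:ℝ) - 1)) / ((k:ℝ) - 1) := by
      linarith
    have h3 := (lt_div_iff₀ hkpos).mp h2
    linarith
  have hcount : (k - 1) * (q ^ d + G.ncard) < q ^ d * (q - 1) := by
    have hcast : (((k - 1) * (q ^ d + G.ncard) : ℕ) : ℝ) < ((q ^ d * (q - 1) : ℕ) : ℝ) := by
      push_cast [Nat.cast_sub (by omega : 1 ≤ k), Nat.cast_sub (by omega : 1 ≤ q)]
      exact keyR
    exact_mod_cast hcast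
  have hGsub : G ⊆ {p : Polynomial F | p.degree = (d : ℕ)} := fun g hg => hg.1
  have hGsymm : ∀ g ∈ G, -g ∈ G := by
    rintro g ⟨hgdeg, f₁, f₂, hm1, hi1, hd1, hm2, hi2, hd2, hsub⟩
    exact ⟨by rw [degree_neg]; exact hgdeg,
      f₂, f₁, hm2, hi2, hd2, hm1, hi1, hd1, by rw [← hsub]; ring⟩
  obtain ⟨s, hscard, hsdeg, hspair⟩ := aux_greedy F d G hGsub hGsymm k hcount k le_rfl
  -- build the k-tuple
  let e : Fin k ≃ s := (s.equivFinOfCardEq hscard).symm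
  let h : Fin k → Polynomial F := fun i => (e i : Polynomial F)
  have hinj : Function.Injective h := fun i j hij => e.injective (Subtype.ext hij)
  have hmem : ∀ i, h i ∈ s := fun i => (e i).2
  have hdegs : ∀ i, (h i).degree = (d : ℕ) := fun i => hsdeg _ (hmem i)
  have hpairs : ∀ i j, i ≠ j → (h i - h j).degree = (d : ℕ) := by
    intro i j hij
    have hne : h i ≠ h j := fun hh => hij (hinj hh)
    exact aux_degree_sub F d _ _ (hdegs i) (hdegs j)
      (hspair _ (hmem i) _ (hmem j) hne).1
  obtain ⟨f, hfdeg, hf2⟩ := hyp h hdegs hpairs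
  obtain ⟨i, j, hiS, hjS, hij⟩ := (Set.one_lt_ncard_iff (Set.toFinite _)).mp hf2
  -- degree facts
  have hn1 : 1 ≤ n := by omega
  have hf0 : f ≠ 0 := fun h0 => by rw [h0, natDegree_zero] at hfdeg; omega
  have hfdeg' : f.degree = (n : ℕ) := by rw [degree_eq_natDegree hf0, hfdeg]
  have haddeg : ∀ l : Fin k, (f + h l).natDegree = n := by
    intro l
    have hlt : (h l).degree < f.degree := by
      rw [hfdeg', hdegs l]
      exact_mod_cast hdn
    exact natDegree_eq_of_degree_eq_some
      (by rw [degree_add_eq_left_of_degree_lt hlt, hfdeg'])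
  have hgG : h i - h j ∈ G := by
    refine ⟨hpairs i j hij, f + h i, f + h j, hiS.1, hiS.2, haddeg i, hjS.1, hjS.2, haddeg j, by ring⟩
  have hne : h i ≠ h j := fun hh => hij (hinj hh)
  exact (hspair _ (hmem i) _ (hmem j) hne).2 hgG
end

section
/- Let q be a prime power, let n > d ≥ 0 be integers with gcd(n − d, q − 1) = 1, and let c ∈ F_q be nonzero. If there exist monic irreducible polynomials f_1, f_2 ∈ F_q[t] of degree n with f_1 − f_2 = c·t^d, then for every nonzero a ∈ F_q there exist monic irreducible polynomials g_1, g_2 ∈ F_q[t] of degree n with g_1 − g_2 = a·t^d. -/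
open Polynomial

/-- **Substitution lemma for monomial gaps** (from the proof of Theorem 1.4(i)).
Let `q` be a prime power, `n > d ≥ 0` with `gcd(n - d, q - 1) = 1`, and `c ∈ 𝔽_q`
nonzero. If `c·t^d` occurs as a difference of monic irreducibles of degree `n`, then
so does `a·t^d` for every nonzero `a ∈ 𝔽_q`. -/
theorem monomial_gap_substitution (F : Type*) [Field F] [Fintype F]
    (n d : ℕ) (hdn : d < n) (hgcd : Nat.gcd (n - d) (Fintype.card F - 1) = 1)
    (c : F) (hc : c ≠ 0)
    (hex : ∃ f₁ f₂ : Polynomial F,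
      f₁.Monic ∧ Irreducible f₁ ∧ f₁.natDegree = n ∧
      f₂.Monic ∧ Irreducible f₂ ∧ f₂.natDegree = n ∧
      f₁ - f₂ = Polynomial.C c * Polynomial.X ^ d) :
    ∀ a : F, a ≠ 0 →
    ∃ g₁ g₂ : Polynomial F,
      g₁.Monic ∧ Irreducible g₁ ∧ g₁.natDegree = n ∧
      g₂.Monic ∧ Irreducible g₂ ∧ g₂.natDegree = n ∧
      g₁ - g₂ = Polynomial.C a * Polynomial.X ^ d := by
  intro a ha
  classical
  obtain ⟨f₁, f₂, hm₁, hi₁, hd₁, hm₂, hi₂, hd₂, hdiff⟩ := hex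
  -- find ω with ω^(n-d) = c / a
  have hcop : (Nat.card Fˣ).Coprime (n - d) := by
    rw [Nat.card_eq_fintype_card, Fintype.card_units]
    exact Nat.coprime_comm.mp hgcd
  obtain ⟨ωu, hωu⟩ := (powCoprime hcop).surjective (Units.mk0 (c * a⁻¹) (by
    exact mul_ne_zero hc (inv_ne_zero ha)))
  set ω : F := (ωu : F) with hωdef
  have hω : ω ≠ 0 := Units.ne_zero ωu
  have hωpow : ω ^ (n - d) = c * a⁻¹ := by
    have := congrArg (Units.val) hωu
    simpa [powCoprime] using this
  haveI : Invertible ω := invertibleOfNonzero hω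
  set e : Polynomial F ≃ₐ[F] Polynomial F := algEquivCMulXAddC ω 0 with he
  have hecomp : ∀ p : Polynomial F, e p = p.comp (C ω * X) := by
    intro p
    simp [he, algEquivCMulXAddC_apply, ← comp_eq_aeval]
  have hqdeg : (C ω * X : Polynomial F).natDegree = 1 := by
    simp [natDegree_C_mul_X _ hω]
  -- properties of the transformed polynomials
  have key : ∀ f : Polynomial F, f.Monic → Irreducible f → f.natDegree = n →
      (C (ω ^ n)⁻¹ * e f).Monic ∧ Irreducible (C (ω ^ n)⁻¹ * e f) ∧
      (C (ω ^ n)⁻¹ * e f).natDegree = n := by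
    intro f hm hi hdeg
    have hωn : (ω ^ n) ≠ 0 := pow_ne_zero _ hω
    have hlc : (e f).leadingCoeff = ω ^ n := by
      rw [hecomp, leadingCoeff_comp (by rw [hqdeg]; norm_num)]
      simp [hm.leadingCoeff, leadingCoeff_C_mul_X, hdeg]
    have hdeg' : (e f).natDegree = n := by
      rw [hecomp, natDegree_comp, hqdeg, hdeg, mul_one]
    refine ⟨?_, ?_, ?_⟩
    · unfold Polynomial.Monic
      rw [leadingCoeff_mul, leadingCoeff_C, hlc, inv_mul_cancel₀ hωn]
    · have h1 : Irreducible (e f) := (MulEquiv.irreducible_iff e.toMulEquiv).mpr hi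
      have h2 : Associated (e f) (C (ω ^ n)⁻¹ * e f) :=
        ⟨(isUnit_C.mpr ((inv_ne_zero hωn).isUnit)).unit, by rw [IsUnit.unit_spec, mul_comm]⟩
      exact h2.irreducible h1
    · rw [natDegree_C_mul (inv_ne_zero hωn), hdeg']
  obtain ⟨hm₁', hi₁', hd₁'⟩ := key f₁ hm₁ hi₁ hd₁
  obtain ⟨hm₂', hi₂', hd₂'⟩ := key f₂ hm₂ hi₂ hd₂
  refine ⟨C (ω ^ n)⁻¹ * e f₁, C (ω ^ n)⁻¹ * e f₂, hm₁', hi₁', hd₁', hm₂', hi₂', hd₂', ?_⟩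
  have hthis : e f₁ - e f₂ = C (c * ω ^ d) * X ^ d := by
    rw [← map_sub, hdiff, hecomp, mul_comp, C_comp, pow_comp, X_comp, mul_pow, ← C_pow, C_mul]
    ring
  have hsplit : ω ^ n = ω ^ (n - d) * ω ^ d := by
    rw [← pow_add, Nat.sub_add_cancel hdn.le]
  have hval : (ω ^ n)⁻¹ * (c * ω ^ d) = a := by
    rw [hsplit, hωpow]
    have hωd : ω ^ d ≠ 0 := pow_ne_zero _ hω
    field_simp
  rw [← mul_sub, hthis, ← mul_assoc, ← C_mul, hval]
end
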